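/- If (A₁,B₁),…,(A_t,B_t) are pairs of sets with |A_i| = a, |B_i| = b, A_i ∩ B_j = ∅ iff i = j, and A_i ∩ A_j ≠ ∅ for all i, j, and additionally |A_i| ≤ |B_i| for all i with the A-sizes weakly increasing and B-sizes weakly decreasing, then t ≤ (1/2)·C(a+b, a). -/

import Mathlib

set_option maxHeartbeats 1000000
set_option synthInstance.maxHeartbeats 400000

open Finset

namespace SW

variable {n : ℕ}

abbrev Lam (n : ℕ) := Finset (Fin n) → ℝ

def inv (S T : Finset (Fin n)) : ℕ := ((S ×ˢ T).filter fun p => p.2 < p.1).card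

def eps (S T : Finset (Fin n)) : ℝ := (-1 : ℝ) ^ (inv S T)

lemma inv_union_left {S T : Finset (Fin n)} (R : Finset (Fin n)) (h : Disjoint S T) :
    inv (S ∪ T) R = inv S R + inv T R := by
  unfold inv
  rw [union_product, filter_union, card_union_of_disjoint]
  refine disjoint_left.2 ?_
  rintro ⟨x, y⟩ hx hy
  simp only [mem_filter, mem_product] at hx hy
  exact (disjoint_left.1 h) hx.1.1 hy.1.1

lemma inv_union_right (S : Finset (Fin n)) {T R : Finset (Fin n)} (h : Disjoint T R) :
    inv S (T ∪ R) = inv S T + inv S R := by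
  unfold inv
  rw [product_union, filter_union, card_union_of_disjoint]
  refine disjoint_left.2 ?_
  rintro ⟨x, y⟩ hx hy
  simp only [mem_filter, mem_product] at hx hy
  exact (disjoint_left.1 h) hx.1.2 hy.1.2

lemma eps_eps_assoc {P Q R : Finset (Fin n)} (hPQ : Disjoint P Q) (hQR : Disjoint Q R) :
    eps P Q * eps (P ∪ Q) R = eps P (Q ∪ R) * eps Q R := by
  unfold eps
  rw [← pow_add, ← pow_add, inv_union_left R hPQ, inv_union_right P hQR]
  ring_nf

def wmul (u w : Lam n) : Lam n :=
  fun M => ∑ S ∈ M.powerset, eps S (M \ S) * u S * w (M \ S)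

def emon (S : Finset (Fin n)) : Lam n := fun T => if T = S then 1 else 0

def eone : Lam n := emon ∅

lemma wmul_add (u w z : Lam n) : wmul u (w + z) = wmul u w + wmul u z := by
  funext M; simp [wmul, mul_add, Finset.sum_add_distrib]

lemma add_wmul (u w z : Lam n) : wmul (u + w) z = wmul u z + wmul w z := by
  funext M
  simp only [wmul, Pi.add_apply]
  rw [← Finset.sum_add_distrib]
  exact Finset.sum_congr rfl (by intros; ring)

lemma wmul_smul (c : ℝ) (u w : Lam n) : wmul u (c • w) = c • wmul u w := by
  funext M
  simp only [wmul, Pi.smul_apply, smul_eq_mul, Finset.mul_sum]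
  exact Finset.sum_congr rfl (by intros; ring)

lemma smul_wmul (c : ℝ) (u w : Lam n) : wmul (c • u) w = c • wmul u w := by
  funext M
  simp only [wmul, Pi.smul_apply, smul_eq_mul, Finset.mul_sum]
  exact Finset.sum_congr rfl (by intros; ring)

lemma wmul_zero (u : Lam n) : wmul u 0 = 0 := by
  funext M; simp [wmul]

lemma zero_wmul (u : Lam n) : wmul 0 u = 0 := by
  funext M; simp [wmul]

lemma wmul_neg (u w : Lam n) : wmul u (-w) = - wmul u w := by
  funext M
  simp only [wmul, Pi.neg_apply]
  rw [← Finset.sum_neg_distrib]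
  exact Finset.sum_congr rfl (by intros; ring)

lemma wmul_sum {ι : Type*} (s : Finset ι) (u : Lam n) (f : ι → Lam n) :
    wmul u (∑ i ∈ s, f i) = ∑ i ∈ s, wmul u (f i) := by
  classical
  induction s using Finset.induction_on with
  | empty => simp [wmul_zero]
  | insert x s hx ih => simp [Finset.sum_insert hx, wmul_add, ih]

lemma sum_wmul {ι : Type*} (s : Finset ι) (u : Lam n) (f : ι → Lam n) :
    wmul (∑ i ∈ s, f i) u = ∑ i ∈ s, wmul (f i) u := by
  classical
  induction s using Finset.induction_on with
  | empty => simp [zero_wmul]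
  | insert x s hx ih => simp [Finset.sum_insert hx, add_wmul, ih]

lemma wmul_emon (u : Lam n) (T : Finset (Fin n)) (M : Finset (Fin n)) :
    wmul u (emon T) M = if T ⊆ M then eps (M \ T) T * u (M \ T) else 0 := by
  classical
  unfold wmul emon
  by_cases hT : T ⊆ M
  · rw [if_pos hT]
    rw [Finset.sum_eq_single_of_mem (M \ T) (by simp [mem_powerset])]
    · rw [sdiff_sdiff_right_self, inf_eq_inter, (inter_eq_right).2 hT, if_pos rfl, mul_one]
    · intro S hS hSne
      rcases eq_or_ne (M \ S) T with hMS | hMS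
      · exfalso
        apply hSne
        have : M \ (M \ S) = M \ T := by rw [hMS]
        rwa [sdiff_sdiff_right_self, inf_eq_inter, (inter_eq_right).2 (mem_powerset.1 hS)] at this
      · rw [if_neg hMS, mul_zero]
  · rw [if_neg hT]
    apply Finset.sum_eq_zero
    intro S hS
    have : M \ S ≠ T := by
      intro hEq
      exact hT (hEq ▸ sdiff_subset)
    rw [if_neg this, mul_zero]

lemma eone_def : (eone : Lam n) = emon ∅ := rfl

lemma wmul_eone (u : Lam n) : wmul u eone = u := by
  funext M
  rw [eone_def, wmul_emon]
  simp [eps, inv]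

lemma eone_wmul (u : Lam n) : wmul eone u = u := by
  funext M
  unfold wmul eone emon
  rw [Finset.sum_eq_single_of_mem ∅ (by simp)]
  · simp [eps, inv]
  · intro S hS hne
    rw [if_neg hne, mul_zero, zero_mul]

lemma emon_wmul_emon {S T : Finset (Fin n)} (h : Disjoint S T) :
    wmul (emon S) (emon T) = eps S T • emon (S ∪ T) := by
  funext M
  rw [wmul_emon]
  by_cases hT : T ⊆ M
  · by_cases hMS : M \ T = S
    · have hM : M = S ∪ T := by
        rw [← hMS]; rw [sdiff_union_self_eq_union]
        exact (union_eq_left.2 hT).symm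
      rw [hMS]
      simp [emon, hM, if_pos rfl]
    · have hM : M ≠ S ∪ T := by
        intro hEq
        apply hMS
        rw [hEq, union_sdiff_right, sdiff_eq_self_of_disjoint h]
      simp [emon, hM, hMS]
  · have hM : M ≠ S ∪ T := by
      intro hEq; exact hT (hEq ▸ subset_union_right)
    rw [if_neg hT]
    simp [emon, hM]

lemma sdiff_union_eq {P S M : Finset (Fin n)} (hPS : P ⊆ S) (hSM : S ⊆ M) :
    (S \ P) ∪ (M \ S) = M \ P := by
  ext x
  simp only [mem_union, mem_sdiff]
  constructor
  · rintro (⟨hxS, hxP⟩ | ⟨hxM, hxS⟩)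
    · exact ⟨hSM hxS, hxP⟩
    · exact ⟨hxM, fun hxP => hxS (hPS hxP)⟩
  · rintro ⟨hxM, hxP⟩
    by_cases hxS : x ∈ S
    · exact Or.inl ⟨hxS, hxP⟩
    · exact Or.inr ⟨hxM, hxS⟩

lemma wmul_assoc (u w z : Lam n) : wmul (wmul u w) z = wmul u (wmul w z) := by
  classical
  funext M
  unfold wmul
  have hL : ∀ S ∈ M.powerset,
      eps S (M \ S) * (∑ P ∈ S.powerset, eps P (S \ P) * u P * w (S \ P)) * z (M \ S)
      = ∑ P ∈ S.powerset, eps S (M \ S) * (eps P (S \ P) * u P * w (S \ P)) * z (M \ S) := by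
    intro S _
    rw [Finset.mul_sum, Finset.sum_mul]
  have hR : ∀ P ∈ M.powerset,
      eps P (M \ P) * u P * (∑ Q ∈ (M \ P).powerset, eps Q ((M \ P) \ Q) * w Q * z ((M \ P) \ Q))
      = ∑ Q ∈ (M \ P).powerset, eps P (M \ P) * u P * (eps Q ((M \ P) \ Q) * w Q * z ((M \ P) \ Q)) := by
    intro P _
    rw [Finset.mul_sum]
  rw [Finset.sum_congr rfl hL, Finset.sum_congr rfl hR, Finset.sum_sigma', Finset.sum_sigma']
  refine Finset.sum_nbij' (fun p => ⟨p.2, p.1 \ p.2⟩) (fun q => ⟨q.1 ∪ q.2, q.1⟩) ?_ ?_ ?_ ?_ ?_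
  · rintro ⟨S, P⟩ hp
    simp only [mem_sigma, mem_powerset] at hp ⊢
    exact ⟨hp.2.trans hp.1, sdiff_subset_sdiff hp.1 (le_refl _)⟩
  · rintro ⟨P, Q⟩ hq
    simp only [mem_sigma, mem_powerset] at hq ⊢
    have hQ : Q ⊆ M \ P := hq.2
    constructor
    · exact union_subset hq.1 (hQ.trans sdiff_subset)
    · exact subset_union_left
  · rintro ⟨S, P⟩ hp
    simp only [mem_sigma, mem_powerset] at hp
    have : P ∪ (S \ P) = S := union_sdiff_of_subset hp.2
    simp [this]
  · rintro ⟨P, Q⟩ hq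
    simp only [mem_sigma, mem_powerset] at hq
    have hdisj : Disjoint P Q :=
      Finset.disjoint_left.2 fun x hxP hxQ => (mem_sdiff.1 (hq.2 hxQ)).2 hxP
    have : (P ∪ Q) \ P = Q := by
      rw [union_sdiff_left, sdiff_eq_self_of_disjoint hdisj.symm]
    simp [this]
  · rintro ⟨S, P⟩ hp
    simp only [mem_sigma, mem_powerset] at hp
    obtain ⟨hSM, hPS⟩ := hp
    have h1 : (M \ P) \ (S \ P) = M \ S := by
      ext x
      simp only [mem_sdiff]
      constructor
      · rintro ⟨⟨hxM, hxP⟩, hns⟩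
        exact ⟨hxM, fun hxS => hns ⟨hxS, hxP⟩⟩
      · rintro ⟨hxM, hxS⟩
        exact ⟨⟨hxM, fun hxP => hxS (hPS hxP)⟩, fun hx => hxS hx.1⟩
    have hs : P ∪ (S \ P) = S := union_sdiff_of_subset hPS
    have hu : (S \ P) ∪ (M \ S) = M \ P := sdiff_union_eq hPS hSM
    have hd1 : Disjoint P (S \ P) := disjoint_sdiff
    have hd2 : Disjoint (S \ P) (M \ S) := disjoint_sdiff.mono_left (sdiff_subset : S \ P ⊆ S)
    have hsgn := eps_eps_assoc hd1 hd2
    rw [hs, hu] at hsgn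
    show _ = eps P (M \ P) * u P * (eps (S \ P) ((M \ P) \ (S \ P)) * w (S \ P) * z ((M \ P) \ (S \ P)))
    rw [h1]
    linear_combination (u P * w (S \ P) * z (M \ S)) * hsgn

def isHomog (k : ℕ) (u : Lam n) : Prop := ∀ S, u S ≠ 0 → S.card = k

lemma isHomog_emon (S : Finset (Fin n)) : isHomog S.card (emon S) := by
  intro T hT
  unfold emon at hT
  by_cases h : T = S
  · rw [h]
  · simp [h] at hT

lemma isHomog_wmul {j k : ℕ} {u w : Lam n} (hu : isHomog j u) (hw : isHomog k w) :
    isHomog (j + k) (wmul u w) := by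
  intro M hM
  obtain ⟨S, hS, hne⟩ := Finset.exists_ne_zero_of_sum_ne_zero hM
  have hSM : S ⊆ M := mem_powerset.1 hS
  have h1 : u S ≠ 0 := fun h => hne (by simp [h])
  have h2 : w (M \ S) ≠ 0 := fun h => hne (by simp [h])
  have := Finset.card_sdiff_add_card_eq_card hSM
  rw [← hu S h1, ← hw _ h2]
  omega

def isVec (u : Lam n) : Prop := isHomog 1 u

lemma vec_expand {u : Lam n} (h : isVec u) : u = ∑ j : Fin n, u {j} • emon {j} := by
  funext S
  rw [Finset.sum_apply]
  by_cases hS : ∃ a : Fin n, S = {a}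
  · obtain ⟨a, rfl⟩ := hS
    rw [Finset.sum_eq_single a]
    · simp [emon]
    · intro j _ hja
      have : ({a} : Finset (Fin n)) ≠ {j} := by
        simp [Finset.singleton_injective.ne_iff]
        exact fun hh => hja hh.symm
      simp [emon, this]
    · intro ha; exact absurd (Finset.mem_univ a) ha
  · have hu0 : u S = 0 := by
      by_contra hne
      have := h S hne
      rw [Finset.card_eq_one] at this
      exact hS this
    rw [hu0]
    symm
    apply Finset.sum_eq_zero
    intro j _
    have : S ≠ {j} := fun hh => hS ⟨j, hh⟩
    simp [emon, this]

lemma inv_single_single (i j : Fin n) : inv {i} {j} = if j < i then 1 else 0 := by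
  unfold inv
  rw [Finset.singleton_product_singleton, Finset.filter_singleton]
  by_cases h : j < i <;> simp [h]

lemma emon_single_self (i : Fin n) : wmul (emon {i}) (emon {i}) = 0 := by
  funext M
  rw [wmul_emon]
  by_cases h : ({i} : Finset (Fin n)) ⊆ M
  · have : M \ {i} ≠ {i} := by
      intro hh
      have hmem : i ∈ ({i} : Finset (Fin n)) := Finset.mem_singleton_self i
      rw [← hh] at hmem
      simp at hmem
    simp [emon, this]
  · simp [h]

lemma emon_single_anticomm (i j : Fin n) :
    wmul (emon {i}) (emon {j}) = - wmul (emon {j}) (emon {i}) := by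
  rcases eq_or_ne i j with rfl | hij
  · simp [emon_single_self]
  · have hd : Disjoint ({i} : Finset (Fin n)) {j} := Finset.disjoint_singleton.2 hij
    rw [emon_wmul_emon hd, emon_wmul_emon hd.symm]
    have : eps ({i} : Finset (Fin n)) {j} = - eps {j} {i} := by
      unfold eps
      rw [inv_single_single, inv_single_single]
      rcases lt_trichotomy i j with h | h | h
      · simp [h, not_lt.2 h.le]
      · exact absurd h hij
      · simp [h, not_lt.2 h.le]
    rw [this, union_comm]
    module

lemma vec_anticomm {u w : Lam n} (hu : isVec u) (hw : isVec w) :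
    wmul u w = - wmul w u := by
  rw [vec_expand hu, vec_expand hw]
  rw [sum_wmul, sum_wmul]
  have hL : ∀ i ∈ (Finset.univ : Finset (Fin n)),
      wmul (u {i} • emon {i}) (∑ j : Fin n, w {j} • emon {j})
      = ∑ j : Fin n, wmul (u {i} • emon {i}) (w {j} • emon {j}) :=
    fun i _ => wmul_sum _ _ _
  have hR : ∀ j ∈ (Finset.univ : Finset (Fin n)),
      wmul (w {j} • emon {j}) (∑ i : Fin n, u {i} • emon {i})
      = ∑ i : Fin n, wmul (w {j} • emon {j}) (u {i} • emon {i}) :=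
    fun j _ => wmul_sum _ _ _
  rw [Finset.sum_congr rfl hL, Finset.sum_congr rfl hR]
  rw [← Finset.sum_neg_distrib, Finset.sum_comm]
  apply Finset.sum_congr rfl
  intro j _
  rw [← Finset.sum_neg_distrib]
  apply Finset.sum_congr rfl
  intro i _
  rw [smul_wmul, wmul_smul, smul_wmul, wmul_smul]
  rw [emon_single_anticomm i j]
  module

lemma vec_self {u : Lam n} (hu : isVec u) : wmul u u = 0 := by
  have h := vec_anticomm hu hu
  funext M
  have h2 := congrFun h M
  simp only [Pi.neg_apply] at h2
  show wmul u u M = (0:ℝ)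
  linarith

def wprod : List (Lam n) → Lam n
  | [] => eone
  | u :: l => wmul u (wprod l)

lemma wprod_append (l₁ l₂ : List (Lam n)) :
    wprod (l₁ ++ l₂) = wmul (wprod l₁) (wprod l₂) := by
  induction l₁ with
  | nil => simp [wprod, eone_wmul]
  | cons u l ih => simp [wprod, ih, wmul_assoc]

def isVecList (l : List (Lam n)) : Prop := ∀ u ∈ l, isVec u

lemma neg_wmul (u w : Lam n) : wmul (-u) w = - wmul u w := by
  funext M
  simp only [wmul, Pi.neg_apply]
  rw [← Finset.sum_neg_distrib]
  exact Finset.sum_congr rfl (by intros; ring)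

lemma vec_mem_kill {x : Lam n} (hx : isVec x) :
    ∀ l : List (Lam n), isVecList l → x ∈ l → wmul x (wprod l) = 0 := by
  intro l
  induction l with
  | nil => intro _ hmem; simp at hmem
  | cons w t ih =>
    intro hvl hmem
    have hw : isVec w := hvl w List.mem_cons_self
    have hvt : isVecList t := fun u hu => hvl u (List.mem_cons_of_mem _ hu)
    rcases List.mem_cons.1 hmem with rfl | hmem'
    · show wmul x (wmul x (wprod t)) = 0
      rw [← wmul_assoc, vec_self hx, zero_wmul]
    · show wmul x (wmul w (wprod t)) = 0
      rw [← wmul_assoc, vec_anticomm hx hw, neg_wmul, wmul_assoc,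
        ih hvt hmem', wmul_zero, neg_zero]

lemma wprod_zero_of_not_nodup :
    ∀ l : List (Lam n), isVecList l → ¬ l.Nodup → wprod l = 0 := by
  intro l
  induction l with
  | nil => intro _ hnd; exact absurd List.nodup_nil hnd
  | cons w t ih =>
    intro hvl hnd
    have hw : isVec w := hvl w List.mem_cons_self
    have hvt : isVecList t := fun u hu => hvl u (List.mem_cons_of_mem _ hu)
    rw [List.nodup_cons] at hnd
    push_neg at hnd
    by_cases hmem : w ∈ t
    · exact vec_mem_kill hw t hvt hmem
    · show wmul w (wprod t) = 0
      rw [ih hvt (hnd hmem), wmul_zero]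

lemma isHomog_eone : isHomog 0 (eone : Lam n) := by
  have := isHomog_emon (∅ : Finset (Fin n))
  simpa [eone] using this

lemma isHomog_wprod : ∀ l : List (Lam n), isVecList l → isHomog l.length (wprod l) := by
  intro l
  induction l with
  | nil => intro _; exact isHomog_eone
  | cons w t ih =>
    intro hvl
    have hw : isVec w := hvl w List.mem_cons_self
    have hvt : isVecList t := fun u hu => hvl u (List.mem_cons_of_mem _ hu)
    have := isHomog_wmul hw (ih hvt)
    simpa [Nat.add_comm, wprod] using this

def liftVec (r : Fin n → ℝ) : Lam n := ∑ j : Fin n, r j • emon {j}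

lemma isVec_liftVec (r : Fin n → ℝ) : isVec (liftVec r) := by
  intro S hS
  unfold liftVec at hS
  rw [Finset.sum_apply] at hS
  obtain ⟨j, _, hj⟩ := Finset.exists_ne_zero_of_sum_ne_zero hS
  simp only [Pi.smul_apply, smul_eq_mul, emon] at hj
  by_cases h : S = {j}
  · rw [h]; simp
  · simp [h] at hj

lemma liftVec_add (r s : Fin n → ℝ) : liftVec (r + s) = liftVec r + liftVec s := by
  unfold liftVec
  rw [← Finset.sum_add_distrib]
  exact Finset.sum_congr rfl (by intros; simp [add_smul])

lemma liftVec_smul (c : ℝ) (r : Fin n → ℝ) : liftVec (c • r) = c • liftVec r := by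
  unfold liftVec
  rw [Finset.smul_sum]
  exact Finset.sum_congr rfl (by intros; simp [mul_smul])

lemma liftVec_single (k : Fin n) : liftVec (Pi.single k 1) = emon {k} := by
  unfold liftVec
  rw [Finset.sum_eq_single k]
  · simp
  · intro j _ hj
    simp [Pi.single_apply, hj]
  · intro h; exact absurd (Finset.mem_univ k) h

def wprodF : ∀ {k : ℕ}, (Fin k → Lam n) → Lam n
  | 0, _ => eone
  | _ + 1, g => wmul (g 0) (wprodF (Fin.tail g))

lemma wprodF_succ {k : ℕ} (g : Fin (k+1) → Lam n) :
    wprodF g = wmul (g 0) (wprodF (Fin.tail g)) := rfl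

lemma wprodF_eq_list {k : ℕ} (g : Fin k → Lam n) : wprodF g = wprod (List.ofFn g) := by
  induction k with
  | zero => rfl
  | succ k ih =>
    rw [List.ofFn_succ]
    show wmul (g 0) (wprodF (Fin.tail g)) = wmul (g 0) (wprod (List.ofFn fun i => g i.succ))
    rw [ih (Fin.tail g)]
    rfl

lemma isVecList_ofFn {k : ℕ} {g : Fin k → Lam n} (h : ∀ i, isVec (g i)) :
    isVecList (List.ofFn g) := by
  intro u hu
  rw [List.mem_ofFn] at hu
  obtain ⟨i, rfl⟩ := hu
  exact h i

lemma wprodF_update_add_aux {k : ℕ} (g : Fin k → Lam n) (i : Fin k) (x y : Lam n) :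
    wprodF (Function.update g i (x + y))
      = wprodF (Function.update g i x) + wprodF (Function.update g i y) := by
  induction k with
  | zero => exact absurd i.2 (by omega)
  | succ k ih =>
    induction i using Fin.cases with
    | zero =>
      rw [wprodF_succ, wprodF_succ, wprodF_succ]
      rw [Fin.tail_update_zero, Fin.tail_update_zero, Fin.tail_update_zero]
      simp only [Function.update_self]
      rw [add_wmul]
    | succ i' =>
      rw [wprodF_succ, wprodF_succ, wprodF_succ]
      rw [Fin.tail_update_succ, Fin.tail_update_succ, Fin.tail_update_succ]
      rw [Function.update_of_ne (Fin.succ_ne_zero i').symm,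
        Function.update_of_ne (Fin.succ_ne_zero i').symm,
        Function.update_of_ne (Fin.succ_ne_zero i').symm]
      rw [ih (Fin.tail g) i', wmul_add]

lemma wprodF_update_smul_aux {k : ℕ} (g : Fin k → Lam n) (i : Fin k) (c : ℝ) (x : Lam n) :
    wprodF (Function.update g i (c • x)) = c • wprodF (Function.update g i x) := by
  induction k with
  | zero => exact absurd i.2 (by omega)
  | succ k ih =>
    induction i using Fin.cases with
    | zero =>
      rw [wprodF_succ, wprodF_succ]
      rw [Fin.tail_update_zero, Fin.tail_update_zero]
      simp only [Function.update_self]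
      rw [smul_wmul]
    | succ i' =>
      rw [wprodF_succ, wprodF_succ]
      rw [Fin.tail_update_succ, Fin.tail_update_succ]
      rw [Function.update_of_ne (Fin.succ_ne_zero i').symm,
        Function.update_of_ne (Fin.succ_ne_zero i').symm]
      rw [ih (Fin.tail g) i', wmul_smul]

lemma wprodF_update_add {k : ℕ} [inst : DecidableEq (Fin k)] (g : Fin k → Lam n) (i : Fin k)
    (x y : Lam n) :
    wprodF (Function.update g i (x + y))
      = wprodF (Function.update g i x) + wprodF (Function.update g i y) := by
  obtain rfl : inst = instDecidableEqFin k := Subsingleton.elim _ _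
  exact wprodF_update_add_aux g i x y

lemma wprodF_update_smul {k : ℕ} [inst : DecidableEq (Fin k)] (g : Fin k → Lam n) (i : Fin k)
    (c : ℝ) (x : Lam n) :
    wprodF (Function.update g i (c • x)) = c • wprodF (Function.update g i x) := by
  obtain rfl : inst = instDecidableEqFin k := Subsingleton.elim _ _
  exact wprodF_update_smul_aux g i c x

lemma wprodF_eq_zero_of_eq {k : ℕ} (g : Fin k → Lam n) (hv : ∀ i, isVec (g i))
    {i j : Fin k} (hij : i ≠ j) (hg : g i = g j) : wprodF g = 0 := by
  rw [wprodF_eq_list]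
  apply wprod_zero_of_not_nodup _ (isVecList_ofFn hv)
  intro hnd
  have hinj := List.nodup_iff_injective_get.1 hnd
  have : (List.ofFn g).get ⟨i, by simp⟩ = (List.ofFn g).get ⟨j, by simp⟩ := by
    simp only [List.get_ofFn]
    simpa using hg
  have := hinj this
  apply hij
  exact Fin.val_injective (by simpa using congrArg Fin.val this)

lemma liftVec_comp_update_aux (rows : Fin n → Fin n → ℝ) (i : Fin n) (v : Fin n → ℝ) :
    (fun k => liftVec (Function.update rows i v k))
      = Function.update (fun k => liftVec (rows k)) i (liftVec v) := by
  funext k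
  rcases eq_or_ne k i with rfl | hk
  · simp
  · simp [Function.update_of_ne hk]

lemma liftVec_comp_update [inst : DecidableEq (Fin n)] (rows : Fin n → Fin n → ℝ) (i : Fin n)
    (v : Fin n → ℝ) :
    (fun k => liftVec (Function.update rows i v k))
      = Function.update (fun k => liftVec (rows k)) i (liftVec v) := by
  obtain rfl : inst = instDecidableEqFin n := Subsingleton.elim _ _
  exact liftVec_comp_update_aux rows i v

def altF : AlternatingMap ℝ (Fin n → ℝ) ℝ (Fin n) where
  toFun := fun rows => wprodF (fun k => liftVec (rows k)) Finset.univ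
  map_update_add' := by
    intro _ rows i x y
    rw [liftVec_comp_update, liftVec_comp_update, liftVec_comp_update, liftVec_add,
      wprodF_update_add]
    simp
  map_update_smul' := by
    intro _ rows i c x
    rw [liftVec_comp_update, liftVec_comp_update, liftVec_smul, wprodF_update_smul]
    simp
  map_eq_zero_of_eq' := by
    intro rows i j hg hij
    rw [wprodF_eq_zero_of_eq (fun k => liftVec (rows k)) (fun k => isVec_liftVec _) hij
      (show liftVec (rows i) = liftVec (rows j) by rw [hg])]
    simp

lemma altF_apply (rows : Fin n → Fin n → ℝ) :
    altF rows = wprodF (fun k => liftVec (rows k)) Finset.univ := rfl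

lemma wprodF_emon_strictMono : ∀ {k : ℕ} (g : Fin k → Fin n), StrictMono g →
    wprodF (fun i => emon {g i}) = emon (Finset.image g Finset.univ) := by
  intro k
  induction k with
  | zero =>
    intro g _
    show eone = _
    rw [Finset.univ_eq_empty, Finset.image_empty]
    rfl
  | succ k ih =>
    intro g hg
    rw [wprodF_succ]
    have htail : StrictMono (fun i : Fin k => g i.succ) := fun x y hxy =>
      hg (Fin.succ_lt_succ_iff.2 hxy)
    have ht : wprodF (Fin.tail fun i => emon {g i})
        = emon (Finset.image (fun i : Fin k => g i.succ) Finset.univ) := ih _ htail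
    rw [ht]
    set T := Finset.image (fun i : Fin k => g i.succ) Finset.univ with hT
    have hd : Disjoint ({g 0} : Finset (Fin n)) T := by
      rw [Finset.disjoint_singleton_left]
      rw [hT]
      simp only [Finset.mem_image, Finset.mem_univ, true_and]
      rintro ⟨i, hgi⟩
      exact absurd hgi.symm (ne_of_lt (hg (Fin.succ_pos i)))
    rw [emon_wmul_emon hd]
    have heps : eps ({g 0} : Finset (Fin n)) T = 1 := by
      unfold eps
      have hinv : inv ({g 0} : Finset (Fin n)) T = 0 := by
        unfold inv
        rw [Finset.card_eq_zero, Finset.filter_eq_empty_iff]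
        rintro ⟨x, y⟩ hxy
        rw [Finset.mem_product] at hxy
        obtain ⟨hx, hy⟩ := hxy
        rw [Finset.mem_singleton] at hx
        rw [hT] at hy
        simp only [Finset.mem_image, Finset.mem_univ, true_and] at hy
        obtain ⟨i, rfl⟩ := hy
        subst hx
        exact not_lt.2 (hg (Fin.succ_pos i)).le
      rw [hinv, pow_zero]
    rw [heps, one_smul]
    have hun : ({g 0} : Finset (Fin n)) ∪ T = Finset.image g Finset.univ := by
      ext y
      rw [hT]
      simp only [Finset.mem_union, Finset.mem_singleton, Finset.mem_image, Finset.mem_univ,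
        true_and]
      constructor
      · rintro (rfl | ⟨i, rfl⟩)
        exacts [⟨0, rfl⟩, ⟨i.succ, rfl⟩]
      · rintro ⟨i, rfl⟩
        induction i using Fin.cases with
        | zero => exact Or.inl rfl
        | succ i' => exact Or.inr ⟨i', rfl⟩
    rw [hun]

lemma altF_basisFun : altF (n := n) (⇑(Pi.basisFun ℝ (Fin n))) = 1 := by
  rw [altF_apply]
  have h1 : (fun k : Fin n => liftVec ((Pi.basisFun ℝ (Fin n)) k)) = fun k => emon {k} := by
    funext k
    rw [Pi.basisFun_apply]
    exact liftVec_single k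
  rw [h1]
  have h2 := wprodF_emon_strictMono (n := n) id strictMono_id
  simp only [id_eq] at h2
  rw [h2, Finset.image_id]
  simp [emon]

lemma top_coeff_det (rows : Fin n → Fin n → ℝ) :
    wprodF (fun k => liftVec (rows k)) Finset.univ = (Matrix.of rows).det := by
  have h := AlternatingMap.eq_smul_basis_det (e := Pi.basisFun ℝ (Fin n)) (altF (n := n))
  have h2 : altF (n := n) rows
      = (altF (n := n) ⇑(Pi.basisFun ℝ (Fin n)) • (Pi.basisFun ℝ (Fin n)).det) rows := by
    rw [← h]
  rw [← altF_apply, h2]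
  rw [AlternatingMap.smul_apply, altF_basisFun, Pi.basisFun_det]
  show (1:ℝ) • Matrix.detRowAlternating rows = _
  rw [one_smul]
  rfl

def wt (S : Finset (Fin n)) : ℕ := ∑ x ∈ S, 2 ^ (x : ℕ)

lemma wt_union {S T : Finset (Fin n)} (h : Disjoint S T) : wt (S ∪ T) = wt S + wt T := by
  unfold wt
  exact Finset.sum_union h

lemma sum_range_two_pow (m : ℕ) : (∑ x ∈ Finset.range m, 2 ^ x) + 1 = 2 ^ m := by
  induction m with
  | zero => simp
  | succ m ih =>
    rw [Finset.sum_range_succ, pow_succ]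
    omega

lemma wt_lt_helper {B : Finset (Fin n)} {m : Fin n} (hB : ∀ x ∈ B, x < m) :
    wt B < 2 ^ (m : ℕ) := by
  unfold wt
  have h1 : ∑ x ∈ B, 2 ^ (x : ℕ) ≤ ∑ j ∈ Finset.range (m : ℕ), 2 ^ j := by
    have himg : ∑ x ∈ B, 2 ^ (x : ℕ)
        = ∑ j ∈ B.image (fun x : Fin n => (x : ℕ)), 2 ^ j := by
      rw [Finset.sum_image]
      intro x _ y _ hxy
      exact Fin.val_injective hxy
    rw [himg]
    apply Finset.sum_le_sum_of_subset
    intro j hj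
    rw [Finset.mem_image] at hj
    obtain ⟨x, hx, rfl⟩ := hj
    rw [Finset.mem_range]
    exact hB x hx
  have h2 := sum_range_two_pow (m : ℕ)
  omega

lemma wt_injective : ∀ S T : Finset (Fin n), wt S = wt T → S = T := by
  have key : ∀ A B : Finset (Fin n), Disjoint A B → ∀ m : Fin n, m ∈ A →
      (∀ x ∈ A ∪ B, x ≤ m) → wt A ≠ wt B := by
    intro A B hd m hm hmax
    have h1 : 2 ^ (m : ℕ) ≤ wt A := by
      unfold wt
      exact Finset.single_le_sum (f := fun x : Fin n => 2 ^ (x : ℕ))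
        (fun x _ => Nat.zero_le _) hm
    have h2 : wt B < 2 ^ (m : ℕ) := by
      apply wt_lt_helper
      intro x hx
      have hxm : x ≤ m := hmax x (Finset.mem_union_right _ hx)
      have hne : x ≠ m := by
        rintro rfl
        exact (Finset.disjoint_left.1 hd) hm hx
      exact lt_of_le_of_ne hxm hne
    omega
  intro S T hST
  by_contra hne
  have hDS : wt S = wt (S \ T) + wt (S ∩ T) := by
    rw [← wt_union (Finset.sdiff_disjoint.mono_right Finset.inter_subset_right),
      Finset.sdiff_union_inter]
  have hDT : wt T = wt (T \ S) + wt (T ∩ S) := by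
    rw [← wt_union (Finset.sdiff_disjoint.mono_right Finset.inter_subset_right),
      Finset.sdiff_union_inter]
  rw [Finset.inter_comm T S] at hDT
  have hAB : wt (S \ T) = wt (T \ S) := by omega
  have hdisj : Disjoint (S \ T) (T \ S) :=
    Finset.disjoint_left.2 fun x hx hx' => (Finset.mem_sdiff.1 hx).2 (Finset.mem_sdiff.1 hx').1
  have hUne : ((S \ T) ∪ (T \ S)).Nonempty := by
    rw [Finset.nonempty_iff_ne_empty]
    intro hE
    rw [Finset.union_eq_empty] at hE
    apply hne
    apply Finset.Subset.antisymm
    · intro x hx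
      by_contra hxT
      have : x ∈ S \ T := Finset.mem_sdiff.2 ⟨hx, hxT⟩
      rw [hE.1] at this
      simp at this
    · intro x hx
      by_contra hxS
      have : x ∈ T \ S := Finset.mem_sdiff.2 ⟨hx, hxS⟩
      rw [hE.2] at this
      simp at this
  set D := (S \ T) ∪ (T \ S) with hD
  have hmax := fun x (hx : x ∈ D) => Finset.le_max' D x hx
  have hmem := Finset.max'_mem D hUne
  rcases Finset.mem_union.1 hmem with hmA | hmB
  · exact key (S \ T) (T \ S) hdisj _ hmA hmax hAB
  · refine key (T \ S) (S \ T) hdisj.symm _ hmB ?_ hAB.symm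
    intro x hx
    refine hmax x ?_
    rw [hD]
    rcases Finset.mem_union.1 hx with hc | hc
    · exact Finset.mem_union_right _ hc
    · exact Finset.mem_union_left _ hc

lemma exists_lead_family :
    ∀ (d : ℕ) (U : Submodule ℝ (Lam n)), Module.finrank ℝ U = d →
    ∃ (u : Fin d → Lam n) (Sm : Fin d → Finset (Fin n)),
      (∀ k, u k ∈ U) ∧ (∀ k, u k (Sm k) ≠ 0) ∧ Function.Injective Sm ∧
      (∀ k P, u k P ≠ 0 → wt (Sm k) ≤ wt P) := by
  intro d
  induction d with
  | zero =>
    intro U _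
    exact ⟨fun k => k.elim0, fun k => k.elim0, fun k => k.elim0, fun k => k.elim0,
      fun k => k.elim0, fun k => k.elim0⟩
  | succ d ih =>
    intro U hU
    classical
    have hUne : U ≠ ⊥ := by
      intro hbot
      rw [hbot, finrank_bot] at hU
      omega
    obtain ⟨v, hvU, hvne⟩ := Submodule.ne_bot_iff U |>.1 hUne
    have hvP : ∃ P, v P ≠ 0 := by
      by_contra hv
      push_neg at hv
      exact hvne (funext hv)
    set Ssup : Finset (Finset (Fin n)) :=
      Finset.univ.filter (fun P => ∃ w ∈ U, w P ≠ 0) with hSsup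
    have hSne : Ssup.Nonempty := by
      obtain ⟨P, hP⟩ := hvP
      exact ⟨P, by simp [hSsup]; exact ⟨v, hvU, hP⟩⟩
    obtain ⟨S₀, hS₀mem, hS₀min⟩ := Finset.exists_min_image Ssup wt hSne
    rw [hSsup, Finset.mem_filter] at hS₀mem
    obtain ⟨-, u₀, hu₀U, hu₀ne⟩ := hS₀mem
    set φ : U →ₗ[ℝ] ℝ := (LinearMap.proj S₀).comp U.subtype with hφ
    have hφne : φ ⟨u₀, hu₀U⟩ ≠ 0 := hu₀ne
    have hrange : Module.finrank ℝ (LinearMap.range φ) = 1 := by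
      have hle : Module.finrank ℝ (LinearMap.range φ) ≤ 1 := by
        have := Submodule.finrank_le (LinearMap.range φ)
        simpa using this
      have hne : LinearMap.range φ ≠ ⊥ := by
        intro hb
        have : φ ⟨u₀, hu₀U⟩ ∈ LinearMap.range φ := LinearMap.mem_range_self _ _
        rw [hb, Submodule.mem_bot] at this
        exact hφne this
      have hpos : 0 < Module.finrank ℝ (LinearMap.range φ) := by
        rcases Nat.eq_zero_or_pos (Module.finrank ℝ (LinearMap.range φ)) with h0 | h
        · exfalso
          exact hne (Submodule.finrank_eq_zero.1 h0)
        · exact h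
      omega
    have hker : Module.finrank ℝ (LinearMap.ker φ) = d := by
      have := LinearMap.finrank_range_add_finrank_ker φ
      rw [hU, hrange] at this
      omega
    set U' : Submodule ℝ (Lam n) := U ⊓ LinearMap.ker (LinearMap.proj (R := ℝ)
      (φ := fun _ : Finset (Fin n) => ℝ) S₀) with hU'
    have hU'le : U' ≤ U := inf_le_left
    have hcomap : Submodule.comap U.subtype U' = LinearMap.ker φ := by
      rw [hU', Submodule.comap_inf, Submodule.comap_subtype_self, top_inf_eq, hφ,
        LinearMap.ker_comp]
    have hU'rank : Module.finrank ℝ U' = d := by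
      rw [← hker, ← hcomap]
      exact (Submodule.comapSubtypeEquivOfLe hU'le).finrank_eq.symm
    obtain ⟨u', Sm', hmem', hnz', hinj', hlead'⟩ := ih U' hU'rank
    refine ⟨Fin.cons u₀ u', Fin.cons S₀ Sm', ?_, ?_, ?_, ?_⟩
    · intro k
      induction k using Fin.cases with
      | zero => simpa using hu₀U
      | succ k' => simpa using hU'le (hmem' k')
    · intro k
      induction k using Fin.cases with
      | zero => simpa using hu₀ne
      | succ k' => simpa using hnz' k'
    · intro k l hkl
      induction k using Fin.cases with
      | zero =>
        induction l using Fin.cases with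
        | zero => rfl
        | succ l' =>
          exfalso
          simp only [Fin.cons_zero, Fin.cons_succ] at hkl
          have h0 : u' l' S₀ = 0 := by
            have := (hmem' l')
            rw [hU'] at this
            have h2 := this.2
            simpa using h2
          rw [hkl] at h0
          exact hnz' l' h0
      | succ k' =>
        induction l using Fin.cases with
        | zero =>
          exfalso
          simp only [Fin.cons_zero, Fin.cons_succ] at hkl
          have h0 : u' k' S₀ = 0 := by
            have := (hmem' k')
            rw [hU'] at this
            have h2 := this.2
            simpa using h2
          rw [← hkl] at h0
          exact hnz' k' h0
        | succ l' =>
          simp only [Fin.cons_succ] at hkl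
          rw [hinj' hkl]
    · intro k P hP
      induction k using Fin.cases with
      | zero =>
        simp only [Fin.cons_zero] at hP ⊢
        refine hS₀min P ?_
        rw [hSsup, Finset.mem_filter]
        exact ⟨Finset.mem_univ _, u₀, hu₀U, hP⟩
      | succ k' =>
        simp only [Fin.cons_succ] at hP ⊢
        exact hlead' k' P hP

lemma card_supersets {a b : ℕ} (hbn : b ≤ n) {S : Finset (Fin n)} (hS : S.card = a)
    (hab : a ≤ b) :
    (((Finset.univ : Finset (Fin n)).powersetCard b).filter (fun B => S ⊆ B)).card
      = Nat.choose (n - a) (b - a) := by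
  classical
  have hcu : ((Finset.univ : Finset (Fin n)) \ S).card = n - a := by
    rw [Finset.card_sdiff_of_subset (Finset.subset_univ S), hS, Finset.card_univ, Fintype.card_fin]
  rw [← hcu, ← Finset.card_powersetCard (b - a) ((Finset.univ : Finset (Fin n)) \ S)]
  apply Finset.card_bij' (fun B _ => B \ S) (fun T _ => T ∪ S)
  · intro B hB
    rw [Finset.mem_filter, Finset.mem_powersetCard] at hB
    obtain ⟨⟨hBu, hBc⟩, hSB⟩ := hB
    rw [Finset.mem_powersetCard]
    constructor
    · exact Finset.sdiff_subset_sdiff hBu (le_refl _)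
    · rw [Finset.card_sdiff_of_subset hSB, hBc, hS]
  · intro T hT
    rw [Finset.mem_powersetCard] at hT
    obtain ⟨hTu, hTc⟩ := hT
    have hdisj : Disjoint T S := by
      refine Finset.disjoint_left.2 fun x hxT hxS => ?_
      exact (Finset.mem_sdiff.1 (hTu hxT)).2 hxS
    rw [Finset.mem_filter, Finset.mem_powersetCard]
    refine ⟨⟨Finset.subset_univ _, ?_⟩, Finset.subset_union_right⟩
    rw [Finset.card_union_of_disjoint hdisj, hTc, hS]
    omega
  · intro B hB
    rw [Finset.mem_filter] at hB
    exact Finset.sdiff_union_of_subset hB.2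
  · intro T hT
    rw [Finset.mem_powersetCard] at hT
    have hdisj : Disjoint T S := by
      refine Finset.disjoint_left.2 fun x hxT hxS => ?_
      exact (Finset.mem_sdiff.1 (hT.1 hxT)).2 hxS
    rw [Finset.union_sdiff_right, Finset.sdiff_eq_self_of_disjoint hdisj]

lemma exists_matching {a b : ℕ} (hab : a ≤ b) (hn : n = a + b) :
    ∃ F : Finset (Fin n) → Finset (Fin n),
      (∀ S, S.card = a → S ⊆ F S ∧ (F S).card = b) ∧
      (∀ S T, S.card = a → T.card = a → F S = F T → S = T) := by
  classical
  have hbn : b ≤ n := by omega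
  set r : {S : Finset (Fin n) // S.card = a} → Finset (Finset (Fin n)) :=
    fun S => ((Finset.univ : Finset (Fin n)).powersetCard b).filter (fun B => S.val ⊆ B)
    with hr
  have hall : ∀ s : Finset {S : Finset (Fin n) // S.card = a},
      s.card ≤ (s.biUnion r).card := by
    intro s
    have hcb : 0 < Nat.choose b a := Nat.choose_pos hab
    have hdouble := Finset.card_mul_le_card_mul
      (fun (S : {S : Finset (Fin n) // S.card = a}) (B : Finset (Fin n)) => S.val ⊆ B)
      (s := s) (t := s.biUnion r) (m := Nat.choose b a) (n := Nat.choose b a) ?_ ?_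
    · exact Nat.le_of_mul_le_mul_right hdouble hcb
    · intro S hS
      have hsub : r S ⊆ (s.biUnion r).filter (fun B => S.val ⊆ B) := by
        intro B hB
        rw [Finset.mem_filter]
        refine ⟨Finset.mem_biUnion.2 ⟨S, hS, hB⟩, ?_⟩
        rw [hr, Finset.mem_filter] at hB
        exact hB.2
      have hcard : (r S).card = Nat.choose b a := by
        rw [hr]
        have := card_supersets (n := n) hbn S.2 hab
        rw [this]
        have h1 : n - a = b := by omega
        rw [h1]
        exact Nat.choose_symm hab
      calc Nat.choose b a = (r S).card := hcard.symm
        _ ≤ _ := Finset.card_le_card hsub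
    · intro B hB
      have hBb : B.card = b := by
        rw [Finset.mem_biUnion] at hB
        obtain ⟨S, _, hSB⟩ := hB
        rw [hr, Finset.mem_filter, Finset.mem_powersetCard] at hSB
        exact hSB.1.2
      calc (Finset.bipartiteBelow (fun S (B : Finset (Fin n)) => S.val ⊆ B) s B).card
          ≤ (B.powersetCard a).card := by
            apply Finset.card_le_card_of_injOn (fun S => S.val)
            · intro S hS
              rw [Finset.bipartiteBelow, Finset.mem_coe, Finset.mem_filter] at hS
              rw [Finset.mem_coe, Finset.mem_powersetCard]
              exact ⟨hS.2, S.2⟩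
            · intro S₁ _ S₂ _ h
              exact Subtype.ext h
        _ = Nat.choose b a := by rw [Finset.card_powersetCard, hBb]
  obtain ⟨f, hfinj, hfmem⟩ := (Finset.all_card_le_biUnion_card_iff_exists_injective r).1 hall
  refine ⟨fun S => if h : S.card = a then f ⟨S, h⟩ else ∅, ?_, ?_⟩
  · intro S hS
    dsimp only
    rw [dif_pos hS]
    have := hfmem ⟨S, hS⟩
    rw [hr, Finset.mem_filter, Finset.mem_powersetCard] at this
    exact ⟨this.2, this.1.2⟩
  · intro S T hS hT hFST
    dsimp only at hFST
    rw [dif_pos hS, dif_pos hT] at hFST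
    have := hfinj hFST
    exact congrArg Subtype.val this

lemma eps_ne_zero (S T : Finset (Fin n)) : eps S T ≠ 0 := by
  unfold eps
  exact pow_ne_zero _ (by norm_num)

lemma lead_indep {t a b : ℕ}
    (u : Fin t → Lam n) (Sm : Fin t → Finset (Fin n)) (F : Finset (Fin n) → Finset (Fin n))
    (hScard : ∀ k, (Sm k).card = a)
    (hFsub : ∀ S, S.card = a → S ⊆ F S ∧ (F S).card = b)
    (hFinj : ∀ S T, S.card = a → T.card = a → F S = F T → S = T)
    (hnz : ∀ k, u k (Sm k) ≠ 0) (hSminj : Function.Injective Sm)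
    (hlead : ∀ k P, u k P ≠ 0 → wt (Sm k) ≤ wt P) :
    LinearIndependent ℝ (fun k => wmul (u k) (emon (F (Sm k) \ Sm k))) := by
  classical
  rw [Fintype.linearIndependent_iff]
  intro g hg
  by_contra hgne
  push_neg at hgne
  obtain ⟨i₀, hi₀⟩ := hgne
  set supp : Finset (Fin t) := Finset.univ.filter (fun k => g k ≠ 0) with hsupp
  have hsne : supp.Nonempty := ⟨i₀, by simp [hsupp, hi₀]⟩
  obtain ⟨k₀, hk₀mem, hk₀min⟩ :=
    Finset.exists_min_image supp (fun k => wt (F (Sm k))) hsne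
  rw [hsupp, Finset.mem_filter] at hk₀mem
  have hgk₀ : g k₀ ≠ 0 := hk₀mem.2
  set M : Finset (Fin n) := F (Sm k₀) with hM
  have hgM := congrFun hg M
  rw [Finset.sum_apply, Pi.zero_apply] at hgM
  simp only [Pi.smul_apply, smul_eq_mul] at hgM
  have hterm : ∀ k, k ≠ k₀ →
      g k * (wmul (u k) (emon (F (Sm k) \ Sm k)) M) = 0 := by
    intro k hk
    rcases eq_or_ne (g k) 0 with h0 | h0
    · rw [h0, zero_mul]
    have hkmem : k ∈ supp := by simp [hsupp, h0]
    have hmin : wt (F (Sm k₀)) ≤ wt (F (Sm k)) := hk₀min k hkmem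
    rw [wmul_emon]
    by_cases hTM : F (Sm k) \ Sm k ⊆ M
    · rcases eq_or_ne (u k (M \ (F (Sm k) \ Sm k))) 0 with hu0 | hu0
      · rw [if_pos hTM, hu0, mul_zero, mul_zero]
      exfalso
      -- derive k = k₀
      obtain ⟨hsub, hcard⟩ := hFsub (Sm k) (hScard k)
      have hdis1 : Disjoint (M \ (F (Sm k) \ Sm k)) (F (Sm k) \ Sm k) := Finset.sdiff_disjoint
      have hM1 : (M \ (F (Sm k) \ Sm k)) ∪ (F (Sm k) \ Sm k) = M :=
        Finset.sdiff_union_of_subset hTM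
      have hw1 : wt M = wt (M \ (F (Sm k) \ Sm k)) + wt (F (Sm k) \ Sm k) := by
        have := wt_union hdis1
        rw [hM1] at this
        exact this
      have hdis2 : Disjoint (Sm k) (F (Sm k) \ Sm k) := Finset.disjoint_sdiff
      have hFk : Sm k ∪ (F (Sm k) \ Sm k) = F (Sm k) := Finset.union_sdiff_of_subset hsub
      have hw2 : wt (F (Sm k)) = wt (Sm k) + wt (F (Sm k) \ Sm k) := by
        have := wt_union hdis2
        rw [hFk] at this
        exact this
      have hlead1 : wt (Sm k) ≤ wt (M \ (F (Sm k) \ Sm k)) := hlead k _ hu0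
      have hMM : wt M = wt (F (Sm k₀)) := by rw [hM]
      have heq : wt (M \ (F (Sm k) \ Sm k)) = wt (Sm k) := by omega
      have hMS : M \ (F (Sm k) \ Sm k) = Sm k := wt_injective _ _ heq
      have hMF : M = F (Sm k) := by
        rw [← hM1, hMS, hFk]
      have : Sm k = Sm k₀ := hFinj _ _ (hScard k) (hScard k₀) (by rw [← hMF, hM])
      exact hk (hSminj this)
    · rw [if_neg hTM, mul_zero]
  rw [Finset.sum_eq_single k₀ (fun k _ hk => hterm k hk)
    (fun h => absurd (Finset.mem_univ k₀) h)] at hgM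
  rw [wmul_emon] at hgM
  obtain ⟨hsub₀, _⟩ := hFsub (Sm k₀) (hScard k₀)
  have hTM₀ : F (Sm k₀) \ Sm k₀ ⊆ M := by rw [hM]; exact Finset.sdiff_subset
  have hMS₀ : M \ (F (Sm k₀) \ Sm k₀) = Sm k₀ := by
    rw [hM]
    exact Finset.sdiff_sdiff_eq_self hsub₀
  rw [if_pos hTM₀, hMS₀] at hgM
  rcases mul_eq_zero.1 hgM with h | h
  · exact hgk₀ h
  · rcases mul_eq_zero.1 h with h' | h'
    · exact eps_ne_zero _ _ h'
    · exact hnz k₀ h'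

def homogSub (k : ℕ) : Submodule ℝ (Lam n) where
  carrier := {v | isHomog k v}
  add_mem' := by
    intro v w hv hw S hS
    rcases eq_or_ne (v S) 0 with h | h
    · have hw' : w S ≠ 0 := by
        intro h2
        apply hS
        show v S + w S = 0
        rw [h, h2, add_zero]
      exact hw S hw'
    · exact hv S h
  zero_mem' := by
    intro S hS
    exact absurd rfl hS
  smul_mem' := by
    intro c v hv S hS
    apply hv S
    intro h
    apply hS
    show c * v S = 0
    rw [h, mul_zero]

lemma mem_homogSub {k : ℕ} {v : Lam n} : v ∈ homogSub (n := n) k ↔ isHomog k v := Iff.rfl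

lemma finrank_homogSub (k : ℕ) :
    Module.finrank ℝ (homogSub (n := n) k) = Nat.choose n k := by
  classical
  let e : homogSub (n := n) k ≃ₗ[ℝ] ({S : Finset (Fin n) // S.card = k} → ℝ) :=
    { toFun := fun v S => v.1 S.1
      map_add' := fun v w => rfl
      map_smul' := fun c v => rfl
      invFun := fun r => ⟨fun M => if h : M.card = k then r ⟨M, h⟩ else 0, by
        intro S hS
        by_cases h : S.card = k
        · exact h
        · exfalso
          apply hS
          show (if h : S.card = k then r ⟨S, h⟩ else 0) = 0
          rw [dif_neg h]⟩
      left_inv := by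
        intro v
        apply Subtype.ext
        funext M
        show (if h : M.card = k then v.1 M else 0) = v.1 M
        by_cases h : M.card = k
        · rw [dif_pos h]
        · rw [dif_neg h]
          by_contra hne
          exact h (v.2 M (fun h2 => hne h2.symm))
      right_inv := by
        intro r
        funext S
        show (if h : S.1.card = k then r ⟨S.1, h⟩ else 0) = r S
        rw [dif_pos S.2] }
  rw [e.finrank_eq, Module.finrank_pi, Fintype.card_subtype]
  have hpc : Finset.univ.filter (fun S : Finset (Fin n) => S.card = k)
      = (Finset.univ : Finset (Fin n)).powersetCard k := by
    ext S
    rw [Finset.mem_filter, Finset.mem_powersetCard]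
    constructor
    · rintro ⟨_, h⟩; exact ⟨Finset.subset_univ _, h⟩
    · rintro ⟨_, h⟩; exact ⟨Finset.mem_univ _, h⟩
  rw [hpc, Finset.card_powersetCard, Finset.card_univ, Fintype.card_fin]

lemma wprod_map_ne_zero {α : Type*} (N : ℕ) (μ : α → ℝ) (l : List α) (hlen : l.length = N)
    (hnd : l.Nodup) (hμinj : ∀ x ∈ l, ∀ y ∈ l, μ x = μ y → x = y) :
    wprod (l.map (fun x => liftVec (n := N) (fun j => (μ x) ^ (j : ℕ)))) Finset.univ ≠ 0 := by
  subst hlen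
  classical
  set c : Fin l.length → ℝ := fun k => μ (l.get k) with hc
  have hrows : l.map (fun x => liftVec (n := l.length) (fun j => (μ x) ^ (j : ℕ)))
      = List.ofFn (fun k => liftVec (n := l.length) (fun j => (c k) ^ (j : ℕ))) := by
    rw [← List.ofFn_getElem_eq_map]
    rfl
  rw [hrows, ← wprodF_eq_list]
  rw [top_coeff_det (fun k j => c k ^ (j : ℕ))]
  have hvand : (Matrix.of fun (k j : Fin l.length) => c k ^ (j : ℕ)) = Matrix.vandermonde c := rfl
  rw [hvand, Matrix.det_vandermonde]
  apply Finset.prod_ne_zero_iff.2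
  intro i _
  apply Finset.prod_ne_zero_iff.2
  intro j hj
  rw [Finset.mem_Ioi] at hj
  apply sub_ne_zero_of_ne
  intro hcc
  have hgetinj := List.nodup_iff_injective_get.1 hnd
  have : l.get j = l.get i :=
    hμinj _ (List.get_mem l j) _ (List.get_mem l i) hcc
  have := hgetinj this
  rw [this] at hj
  exact lt_irrefl _ hj

lemma main_bound {α : Type*} [DecidableEq α] (t a b : ℕ) (hab : a ≤ b)
    (A B : Fin t → Finset α)
    (hA : ∀ i, (A i).card = a) (hB : ∀ i, (B i).card = b)
    (h : ∀ i j, A i ∩ B j = ∅ ↔ i = j)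
    (hint : ∀ i j, (A i ∩ A j).Nonempty) :
    2 * t ≤ Nat.choose (a + b) a := by
  classical
  set n := a + b with hn
  set Y : Finset α := Finset.univ.biUnion (fun i : Fin t => A i ∪ B i) with hY
  set ν : α → ℝ := fun x => if hx : x ∈ Y then ((Fintype.equivFin ↥Y ⟨x, hx⟩ : Fin _) : ℕ) else 0
    with hν
  have hνinj : ∀ x ∈ Y, ∀ y ∈ Y, ν x = ν y → x = y := by
    intro x hx y hy hxy
    rw [hν] at hxy
    simp only [dif_pos hx, dif_pos hy] at hxy
    have h1 : ((Fintype.equivFin ↥Y ⟨x, hx⟩ : Fin _) : ℕ)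
        = ((Fintype.equivFin ↥Y ⟨y, hy⟩ : Fin _) : ℕ) := Nat.cast_injective hxy
    have h2 := Fin.val_injective h1
    have h3 := (Fintype.equivFin ↥Y).injective h2
    exact congrArg Subtype.val h3
  set vx : α → Lam n := fun x => liftVec (fun j => (ν x) ^ (j : ℕ)) with hvx
  have hvecl : ∀ l : List α, isVecList (l.map vx) := by
    intro l u hu
    rw [List.mem_map] at hu
    obtain ⟨x, _, rfl⟩ := hu
    exact isVec_liftVec _
  set X : Fin t → Lam n := fun i => wprod ((A i).toList.map vx) with hX
  set Yv : Fin t → Lam n := fun i => wprod ((B i).toList.map vx) with hYv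
  have hXhom : ∀ i, isHomog a (X i) := by
    intro i
    have := isHomog_wprod _ (hvecl (A i).toList)
    rwa [List.length_map, Finset.length_toList, hA] at this
  have hYvhom : ∀ i, isHomog b (Yv i) := by
    intro i
    have := isHomog_wprod _ (hvecl (B i).toList)
    rwa [List.length_map, Finset.length_toList, hB] at this
  have hprod : ∀ s s' : Finset α,
      wmul (wprod (s.toList.map vx)) (wprod (s'.toList.map vx))
        = wprod ((s.toList ++ s'.toList).map vx) := by
    intro s s'
    rw [List.map_append, wprod_append]
  have hkill : ∀ s s' : Finset α, (s ∩ s').Nonempty →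
      wmul (wprod (s.toList.map vx)) (wprod (s'.toList.map vx)) = 0 := by
    intro s s' hss
    obtain ⟨z, hz⟩ := hss
    rw [hprod]
    apply wprod_zero_of_not_nodup _ (hvecl _)
    intro hnd
    rw [List.map_append, List.nodup_append] at hnd
    obtain ⟨-, -, hdisj⟩ := hnd
    rw [Finset.mem_inter] at hz
    exact hdisj _ (List.mem_map_of_mem (f := vx) (Finset.mem_toList.2 hz.1))
      _ (List.mem_map_of_mem (f := vx) (Finset.mem_toList.2 hz.2)) rfl
  have hXX : ∀ i j, wmul (X i) (X j) = 0 := fun i j => hkill _ _ (hint i j)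
  have hXYoff : ∀ i j, i ≠ j → wmul (X i) (Yv j) = 0 := by
    intro i j hij
    apply hkill
    rw [Finset.nonempty_iff_ne_empty]
    intro hE
    exact hij ((h i j).1 hE)
  have hdiag : ∀ i, wmul (X i) (Yv i) Finset.univ ≠ 0 := by
    intro i
    rw [hprod]
    set l : List α := (A i).toList ++ (B i).toList with hl
    have hlen : l.length = n := by
      rw [hl, List.length_append, Finset.length_toList, Finset.length_toList, hA, hB]
    have hmeml : ∀ x ∈ l, x ∈ Y := by
      intro x hx
      rw [hl, List.mem_append] at hx
      rw [hY]
      rcases hx with h1 | h1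
      · exact Finset.mem_biUnion.2
          ⟨i, Finset.mem_univ _, Finset.mem_union_left _ (Finset.mem_toList.1 h1)⟩
      · exact Finset.mem_biUnion.2
          ⟨i, Finset.mem_univ _, Finset.mem_union_right _ (Finset.mem_toList.1 h1)⟩
    have hnd : l.Nodup := by
      rw [hl, List.nodup_append]
      refine ⟨Finset.nodup_toList _, Finset.nodup_toList _, ?_⟩
      intro x hx y hx' hxy
      subst hxy
      have hxa := Finset.mem_toList.1 hx
      have hxb := Finset.mem_toList.1 hx'
      have hmem : x ∈ A i ∩ B i := Finset.mem_inter.2 ⟨hxa, hxb⟩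
      rw [(h i i).2 rfl] at hmem
      simp at hmem
    exact wprod_map_ne_zero n ν l hlen hnd
      (fun x hx y hy => hνinj x (hmeml x hx) y (hmeml y hy))
  -- linear independence of X
  have hXind : LinearIndependent ℝ X := by
    rw [Fintype.linearIndependent_iff]
    intro g hg
    intro j
    have h1 : wmul (∑ i, g i • X i) (Yv j) = ∑ i, g i • wmul (X i) (Yv j) := by
      rw [sum_wmul]
      exact Finset.sum_congr rfl fun i _ => smul_wmul _ _ _
    rw [hg, zero_wmul] at h1
    have h2 := congrFun h1.symm Finset.univ
    rw [Finset.sum_apply, Pi.zero_apply] at h2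
    rw [Finset.sum_eq_single j] at h2
    · rw [Pi.smul_apply, smul_eq_mul] at h2
      rcases mul_eq_zero.1 h2 with h' | h'
      · exact h'
      · exact absurd h' (hdiag j)
    · intro i _ hij
      rw [Pi.smul_apply, hXYoff i j hij, Pi.zero_apply, smul_zero]
    · intro hj
      exact absurd (Finset.mem_univ j) hj
  set U : Submodule ℝ (Lam n) := Submodule.span ℝ (Set.range X) with hU
  have hUrank : Module.finrank ℝ U = t := by
    rw [hU, finrank_span_eq_card hXind, Fintype.card_fin]
  have hUhom : ∀ v ∈ U, isHomog a v := by
    intro v hv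
    have hle : U ≤ homogSub (n := n) a := by
      rw [hU]
      apply Submodule.span_le.2
      rintro _ ⟨i, rfl⟩
      exact hXhom i
    exact hle hv
  obtain ⟨u, Sm, humem, hunz, hSminj, hulead⟩ := exists_lead_family t U hUrank
  have hScard : ∀ k, (Sm k).card = a := fun k => hUhom _ (humem k) _ (hunz k)
  obtain ⟨F, hFsub, hFinj⟩ := exists_matching (n := n) hab hn
  set w : Fin t → Lam n := fun k => wmul (u k) (emon (F (Sm k) \ Sm k)) with hw
  have hwind : LinearIndependent ℝ w :=
    lead_indep u Sm F hScard hFsub hFinj hunz hSminj hulead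
  have hwhom : ∀ k, isHomog b (w k) := by
    intro k
    have hd : b = a + (b - a) := by omega
    have hTcard : (F (Sm k) \ Sm k).card = b - a := by
      obtain ⟨hsub, hcard⟩ := hFsub (Sm k) (hScard k)
      rw [Finset.card_sdiff_of_subset hsub, hcard, hScard k]
    have := isHomog_wmul (hUhom _ (humem k)) (hTcard ▸ isHomog_emon (F (Sm k) \ Sm k))
    rwa [← hd] at this
  -- orthogonality
  have horth : ∀ i k, wmul (X i) (w k) Finset.univ = 0 := by
    intro i k
    have hmem : u k ∈ Submodule.span ℝ (Set.range X) := humem k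
    obtain ⟨c, hc⟩ := (Submodule.mem_span_range_iff_exists_fun ℝ).1 hmem
    rw [hw]
    dsimp only
    rw [← hc]
    have h1 : wmul (∑ j, c j • X j) (emon (F (Sm k) \ Sm k))
        = ∑ j, c j • wmul (X j) (emon (F (Sm k) \ Sm k)) := by
      rw [sum_wmul]
      exact Finset.sum_congr rfl fun j _ => smul_wmul _ _ _
    rw [h1, wmul_sum]
    have h2 : ∀ j, wmul (X i) (c j • wmul (X j) (emon (F (Sm k) \ Sm k))) = 0 := by
      intro j
      rw [wmul_smul, ← wmul_assoc, hXX i j, zero_wmul, smul_zero]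
    rw [Finset.sum_congr rfl fun j _ => h2 j]
    simp
  -- pairing X against Yv
  have hpair : ∀ i j, wmul (X i) (Yv j) Finset.univ = if i = j then
      wmul (X i) (Yv i) Finset.univ else 0 := by
    intro i j
    rcases eq_or_ne i j with rfl | hij
    · rw [if_pos rfl]
    · rw [if_neg hij, hXYoff i j hij]
      rfl
  -- combined independence
  set cmb : Fin t ⊕ Fin t → Lam n := Sum.elim w Yv with hcmb
  have hcmbind : LinearIndependent ℝ cmb := by
    rw [Fintype.linearIndependent_iff]
    intro g hg
    rw [Fintype.sum_sum_type] at hg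
    simp only [hcmb, Sum.elim_inl, Sum.elim_inr] at hg
    -- first: right coefficients vanish
    have hzero : ∀ i, g (Sum.inr i) = 0 := by
      intro i
      have h1 := congrArg (fun v => wmul (X i) v Finset.univ) hg
      rw [wmul_add, wmul_sum, wmul_sum] at h1
      have h2 : ∀ k, wmul (X i) (g (Sum.inl k) • w k) = g (Sum.inl k) • wmul (X i) (w k) :=
        fun k => wmul_smul _ _ _
      have h3 : ∀ j, wmul (X i) (g (Sum.inr j) • Yv j) = g (Sum.inr j) • wmul (X i) (Yv j) :=
        fun j => wmul_smul _ _ _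
      rw [Finset.sum_congr rfl fun k _ => h2 k, Finset.sum_congr rfl fun j _ => h3 j] at h1
      rw [Pi.add_apply, Finset.sum_apply, Finset.sum_apply] at h1
      have h4 : ∑ k, (g (Sum.inl k) • wmul (X i) (w k)) Finset.univ = 0 := by
        apply Finset.sum_eq_zero
        intro k _
        rw [Pi.smul_apply, horth i k, smul_zero]
      have h5 : ∑ j, (g (Sum.inr j) • wmul (X i) (Yv j)) Finset.univ
          = g (Sum.inr i) * wmul (X i) (Yv i) Finset.univ := by
        rw [Finset.sum_eq_single i]
        · rw [Pi.smul_apply, smul_eq_mul]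
        · intro j _ hji
          rw [Pi.smul_apply, hXYoff i j (Ne.symm hji), Pi.zero_apply, smul_zero]
        · intro hi
          exact absurd (Finset.mem_univ i) hi
      rw [h4, h5, zero_add] at h1
      have h6 : wmul (X i) 0 Finset.univ = (0:ℝ) := by rw [wmul_zero]; rfl
      rw [h6] at h1
      rcases mul_eq_zero.1 h1 with h' | h'
      · exact h'
      · exact absurd h' (hdiag i)
    -- now left coefficients vanish
    have hgl : ∑ k, g (Sum.inl k) • w k = 0 := by
      have : ∑ j, g (Sum.inr j) • Yv j = 0 := by
        apply Finset.sum_eq_zero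
        intro j _
        rw [hzero j, zero_smul]
      rw [this, add_zero] at hg
      exact hg
    have hleft := (Fintype.linearIndependent_iff.1 hwind) (fun k => g (Sum.inl k)) hgl
    intro s
    rcases s with k | j
    · exact hleft k
    · exact hzero j
  -- everything lives in homogSub b
  have hmemb : ∀ s : Fin t ⊕ Fin t, cmb s ∈ homogSub (n := n) b := by
    intro s
    rcases s with k | j
    · exact hwhom k
    · exact hYvhom j
  set cmb' : Fin t ⊕ Fin t → homogSub (n := n) b := fun s => ⟨cmb s, hmemb s⟩ with hcmb'
  have hcmb'ind : LinearIndependent ℝ cmb' := by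
    apply LinearIndependent.of_comp (homogSub (n := n) b).subtype
    have : (homogSub (n := n) b).subtype ∘ cmb' = cmb := rfl
    rw [this]
    exact hcmbind
  have hcard := hcmb'ind.fintype_card_le_finrank
  rw [Fintype.card_sum, Fintype.card_fin, finrank_homogSub] at hcard
  have hsym : Nat.choose n b = Nat.choose (a + b) a := by
    have h1 : a + b - a = b := by omega
    have h2 := Nat.choose_symm (Nat.le_add_right a b)
    rw [h1] at h2
    rw [hn]
    exact h2
  rw [hsym] at hcard
  rw [← hn] at hcard
  omega

end SW

theorem stmt_16 {α : Type*} [DecidableEq α] (t a b : ℕ) (hab : a ≤ b)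
    (A B : Fin t → Finset α)
    (hA : ∀ i, (A i).card = a) (hB : ∀ i, (B i).card = b)
    (h : ∀ i j, A i ∩ B j = ∅ ↔ i = j)
    (hint : ∀ i j, (A i ∩ A j).Nonempty) :
    (t : ℝ) ≤ (1 / 2) * Nat.choose (a + b) a := by
  have hmain := SW.main_bound t a b hab A B hA hB h hint
  have h2 : (2 * t : ℝ) ≤ (Nat.choose (a + b) a : ℝ) := by exact_mod_cast hmain
  linarith
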